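/- Let N be a finite cyclic group of order m, u ∈ N with u ≠ 1, p a prime, and r an integer with r^p ≡ 1 (mod m) and gcd(r−1, m) = 1. Then for integers 0 ≤ s < s' ≤ p−1, we have u^{r^s} ≠ u^{r^{s'}}. -/

import Mathlib

/-- In a cyclic group `N` of order `m`, with `p` prime, `r^p ≡ 1 (mod m)` and
`gcd(r - 1, m) = 1`: if `u ≠ 1` and `0 ≤ s < s' ≤ p - 1`, then
`u^(r^s) ≠ u^(r^s')`. -/
theorem pow_ne_pow (N : Type*) [Group N] [Fintype N] (hN : IsCyclic N)
    (m : ℕ) (hm : Fintype.card N = m) (u : N) (hu : u ≠ 1)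
    (p : ℕ) (hp : p.Prime) (r : ℤ)
    (hr : r ^ p ≡ 1 [ZMOD m]) (hcop : Int.gcd (r - 1) (m : ℤ) = 1)
    (s s' : ℕ) (hss : s < s') (hs' : s' ≤ p - 1) :
    u ^ (r ^ s) ≠ u ^ (r ^ s') := by
  intro h
  set t : ℕ := s' - s with ht
  have hts : s' = s + t := by omega
  have htpos : 0 < t := by omega
  have htp : t < p := by have := hp.two_le; omega
  -- order of u divides r^s' - r^s
  have hdvd : (orderOf u : ℤ) ∣ r ^ s' - r ^ s := by
    rw [orderOf_dvd_iff_zpow_eq_one, zpow_sub, h, mul_inv_cancel]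
  have hdvdm : (orderOf u : ℤ) ∣ (m : ℤ) := by
    exact_mod_cast Int.natCast_dvd_natCast.mpr (hm ▸ orderOf_dvd_card)
  -- key: r^s' - r^s is coprime to m
  have hfac : r ^ s' - r ^ s = r ^ s * (r ^ t - 1) := by
    rw [hts, pow_add]; ring
  -- r is coprime to m
  have hrm : IsCoprime r (m : ℤ) := by
    obtain ⟨c, hc⟩ := hr.dvd
    exact ⟨r ^ (p - 1), c, by
      have : r ^ (p - 1) * r = r ^ p := by
        rw [← pow_succ]; congr 1; omega
      linarith [hc, this]⟩
  -- r^t - 1 is coprime to m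
  have hkey : IsCoprime (r ^ t - 1) (m : ℤ) := by
    rw [Int.isCoprime_iff_gcd_eq_one]
    set g : ℕ := Int.gcd (r ^ t - 1) m with hg
    have hg1 : (g : ℤ) ∣ r ^ t - 1 := Int.gcd_dvd_left _ _
    have hg2 : (g : ℤ) ∣ (m : ℤ) := Int.gcd_dvd_right _ _
    have hrt : r ^ t ≡ 1 [ZMOD (g : ℤ)] :=
      (Int.modEq_iff_dvd.mpr (by simpa using hg1.neg_right)).symm.symm
    have hrp : r ^ p ≡ 1 [ZMOD (g : ℤ)] := hr.of_dvd hg2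
    -- find k with t * k ≡ 1 mod p
    have hcop' : p.Coprime t := Nat.coprime_of_lt_prime htpos.ne' htp hp
    obtain ⟨k, -, hk⟩ := Nat.exists_mul_mod_eq_one_of_coprime hcop'.symm hp.one_lt
    have hdm : t * k = p * (t * k / p) + 1 := by
      conv_lhs => rw [← Nat.div_add_mod (t * k) p]
      rw [hk]
    have h1 : r ^ (t * k) ≡ 1 [ZMOD (g : ℤ)] := by
      rw [pow_mul]
      simpa using hrt.pow k
    have h2 : r ^ (t * k) ≡ r [ZMOD (g : ℤ)] := by
      rw [hdm, pow_add, pow_mul, pow_one]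
      calc (r ^ p) ^ (t * k / p) * r ≡ 1 ^ (t * k / p) * r [ZMOD (g : ℤ)] :=
            (hrp.pow _).mul_right r
        _ = r := by ring
    have hr1 : (g : ℤ) ∣ r - 1 := dvd_sub_comm.mp (h2.symm.trans h1).dvd
    have hgd : (g : ℤ) ∣ (1 : ℤ) := by
      have := Int.dvd_gcd hr1 hg2
      rw [hcop] at this; exact_mod_cast this
    exact Nat.dvd_one.mp (by exact_mod_cast hgd)
  have hcop2 : IsCoprime (r ^ s' - r ^ s) (m : ℤ) := by
    rw [hfac]; exact (hrm.pow_left).mul_left hkey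
  obtain ⟨a, b, hab⟩ := hcop2
  have : (orderOf u : ℤ) ∣ 1 := by
    rw [← hab]
    exact dvd_add (Dvd.dvd.mul_left hdvd a) (Dvd.dvd.mul_left hdvdm b)
  have h1 : orderOf u = 1 := Nat.dvd_one.mp (by exact_mod_cast this)
  exact hu (orderOf_eq_one_iff.mp h1)
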